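/- For integers 2 ≤ u ≤ n and p ∈ [0,1], with Ω_d = C(n,d) p^d (1-p)^(n-d), the following identity holds: Σ_{d=2}^{n-u+2} Ω_d · d(d-1) · (1/n) · ((u-1)/(n-1)) · C(n-u,d-2)/C(n-2,d-2) = (u-1) p² (1-p)^(u-2). -/
import Mathlib


/-- Numerator identity for the cloud-to-ripple transition probability `q_u`:
`Σ_{d=2}^{n-u+2} Ω_d · d(d-1) · (1/n) · ((u-1)/(n-1)) · C(n-u,d-2)/C(n-2,d-2)
  = (u-1) p² (1-p)^(u-2)`, with `Ω_d = C(n,d) p^d (1-p)^(n-d)`. -/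
theorem qu_numerator (n u : ℕ) (hu : 2 ≤ u) (hun : u ≤ n)
    (p : ℝ) (hp0 : 0 ≤ p) (hp1 : p ≤ 1) :
    ∑ d ∈ Finset.Icc 2 (n - u + 2),
      (n.choose d : ℝ) * p ^ d * (1 - p) ^ (n - d) *
        ((d : ℝ) * ((d : ℝ) - 1) * (1 / (n : ℝ)) * (((u : ℝ) - 1) / ((n : ℝ) - 1)) *
          (((n - u).choose (d - 2) : ℝ) / ((n - 2).choose (d - 2) : ℝ)))
      = ((u : ℝ) - 1) * p ^ 2 * (1 - p) ^ (u - 2) := by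
  obtain ⟨v, rfl⟩ : ∃ v, u = v + 2 := ⟨u - 2, by omega⟩
  obtain ⟨m, rfl⟩ : ∃ m, n = m + 2 := ⟨n - 2, by omega⟩
  have hvm : v ≤ m := by omega
  have h1 : m + 2 - (v + 2) + 2 = (m - v) + 2 := by omega
  have h2 : (v + 2) - 2 = v := by omega
  rw [h1, h2, ← Finset.Ico_add_one_right_eq_Icc, Finset.sum_Ico_eq_sum_range]
  have h3 : m - v + 2 + 1 - 2 = m - v + 1 := by omega
  rw [h3]
  have hsum : ∑ k ∈ Finset.range (m - v + 1),
      (((m - v).choose k : ℝ) * p ^ k * (1 - p) ^ (m - v - k)) = 1 := by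
    have h := add_pow p (1 - p) (m - v)
    simp only [add_sub_cancel, one_pow] at h
    calc ∑ k ∈ Finset.range (m - v + 1), (((m - v).choose k : ℝ) * p ^ k * (1 - p) ^ (m - v - k))
        = ∑ k ∈ Finset.range (m - v + 1), p ^ k * (1 - p) ^ (m - v - k) * ((m - v).choose k : ℝ) :=
          Finset.sum_congr rfl (fun k _ => by ring)
      _ = 1 := h.symm
  calc ∑ k ∈ Finset.range (m - v + 1),
        ((m + 2).choose (2 + k) : ℝ) * p ^ (2 + k) * (1 - p) ^ (m + 2 - (2 + k)) *
          (((2 + k : ℕ) : ℝ) * (((2 + k : ℕ) : ℝ) - 1) * (1 / ((m + 2 : ℕ) : ℝ)) *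
            ((((v + 2 : ℕ) : ℝ) - 1) / (((m + 2 : ℕ) : ℝ) - 1)) *
            (((m + 2 - (v + 2)).choose (2 + k - 2) : ℝ) / (((m + 2 - 2).choose (2 + k - 2)) : ℝ)))
      = ∑ k ∈ Finset.range (m - v + 1),
        (((v:ℝ) + 2) - 1) * p ^ 2 * (1 - p) ^ v *
          (((m - v).choose k : ℝ) * p ^ k * (1 - p) ^ (m - v - k)) := by
        apply Finset.sum_congr rfl
        intro k hk
        have hk' : k ≤ m - v := by
          simp only [Finset.mem_range] at hk; omega
        have e1 : m + 2 - (v + 2) = m - v := by omega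
        have e2 : 2 + k - 2 = k := by omega
        have e3 : m + 2 - 2 = m := by omega
        have e4 : m + 2 - (2 + k) = m - k := by omega
        have e5 : m - k = v + (m - v - k) := by omega
        rw [e1, e2, e3, e4, e5, pow_add]
        -- key combinatorial identity
        have hnat : (m+2).choose (k+2) * ((k+2)*(k+1)) = (m+2)*(m+1)* m.choose k := by
          have a1 : (m+2) * ((m+1).choose (k+1)) = (m+2).choose (k+2) * (k+2) :=
            Nat.add_one_mul_choose_eq (m+1) (k+1)
          have a2 : (m+1) * (m.choose k) = (m+1).choose (k+1) * (k+1) :=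
            Nat.add_one_mul_choose_eq m k
          calc (m+2).choose (k+2) * ((k+2)*(k+1))
              = (m+2).choose (k+2) * (k+2) * (k+1) := by ring
            _ = (m+2) * ((m+1).choose (k+1) * (k+1)) := by rw [← a1]; ring
            _ = (m+2) * ((m+1) * (m.choose k)) := by rw [← a2]
            _ = (m+2)*(m+1)* m.choose k := by ring
        have hcast : ((m+2).choose (k+2) : ℝ) * ((k+2)*(k+1)) = (m+2)*(m+1)*(m.choose k : ℝ) := by
          exact_mod_cast congrArg (Nat.cast : ℕ → ℝ) hnat
        have hC : (m.choose k : ℝ) ≠ 0 := by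
          exact_mod_cast (Nat.choose_pos (by omega : k ≤ m)).ne'
        have hm0 : ((m:ℝ) + 2) ≠ 0 := by positivity
        have hm1 : ((m:ℝ) + 1) ≠ 0 := by positivity
        have h2k : 2 + k = k + 2 := by omega
        rw [h2k]
        push_cast
        have hm1' : ((m:ℝ) + 2) - 1 = (m:ℝ) + 1 := by ring
        rw [hm1']
        have hpow : (1 - p) ^ (v + (m - v - k)) = (1 - p) ^ v * (1 - p) ^ (m - v - k) :=
          pow_add _ _ _
        field_simp
        linear_combination
          hpow * (((m + 2).choose (k + 2) : ℝ) * ((k : ℝ) + 2) * ((k : ℝ) + 1) * ((v : ℝ) + 1)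
              * p ^ 2 * p ^ k * (((m - v).choose k : ℝ))) +
          hcast * (((v : ℝ) + 1) * p ^ 2 * p ^ k * (1 - p) ^ v * (1 - p) ^ (m - v - k)
              * (((m - v).choose k : ℝ)))
    _ = (((v:ℝ) + 2) - 1) * p ^ 2 * (1 - p) ^ v := by
        rw [← Finset.mul_sum, hsum, mul_one]
    _ = (((v + 2 : ℕ) : ℝ) - 1) * p ^ 2 * (1 - p) ^ v := by push_cast; ring
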